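/- arXiv:1311.1393 — 2 statements merged into one kernel-verified Lean document; each statement's English description precedes it below -/
import Mathlib

section
/- Let s > 0, r > 0, 1 ≤ p ≤ ∞, and let B be a nontrivial closed ball in X (possibly B = X). Then the Sobolev ball W̄^s_r(L_p(B)) is a compact subset of L_p(B). -/
open MeasureTheory ENNReal

noncomputable section

/-- A diffusion measure space: a quasi-metric space with a Borel probability measure,
an orthonormal system of continuous functions with associated nondecreasing "eigenvalues",
satisfying Gaussian upper and lower bounds for the generalized heat kernel. -/
structure DiffusionSetting (X : Type*) [TopologicalSpace X] [MeasurableSpace X]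
    [BorelSpace X] where
  /-- the quasi-metric -/
  rho : X → X → ℝ
  rho_nonneg : ∀ x y, 0 ≤ rho x y
  rho_symm : ∀ x y, rho x y = rho y x
  rho_eq_zero_iff : ∀ x y, rho x y = 0 ↔ x = y
  /-- quasi-triangle constant -/
  Kq : ℝ
  one_le_Kq : 1 ≤ Kq
  rho_quasi_triangle : ∀ x y z, rho x z ≤ Kq * (rho x y + rho y z)
  /-- the Borel probability measure -/
  μ : Measure X
  μ_prob : IsProbabilityMeasure μ
  /-- the orthonormal system -/
  phi : ℕ → X → ℝ
  phi_cont : ∀ k, Continuous (phi k)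
  phi_zero_eq_one : ∀ x, phi 0 x = 1
  phi_orthonormal : ∀ j k, ∫ x, phi j x * phi k x ∂μ = if j = k then 1 else 0
  phi_complete : ∀ f : X → ℝ, MemLp f 2 μ → (∀ k, ∫ x, f x * phi k x ∂μ = 0) → f =ᵐ[μ] 0
  /-- the eigenvalues -/
  lam : ℕ → ℝ
  lam_zero : lam 0 = 0
  lam_mono : Monotone lam
  lam_tendsto : Filter.Tendsto lam Filter.atTop Filter.atTop
  /-- the "dimension" of the space -/
  alp : ℝ
  alp_pos : 0 < alp
  /-- the generalized heat kernel converges absolutely -/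
  heat_abs_conv : ∀ t : ℝ, 0 < t → ∀ x y : X,
    Summable fun k => |Real.exp (-(lam k) ^ 2 * t) * phi k x * phi k y|
  cball_compact : ∀ (x : X) (t : ℝ), 0 < t → IsCompact {y | rho x y ≤ t}
  /-- ball volume constant -/
  Cb : ℝ
  ball_vol_le : ∀ (x : X) (t : ℝ), 0 < t → μ {y | rho x y ≤ t} ≤ ENNReal.ofReal (Cb * t ^ alp)
  /-- Gaussian upper bound constants -/
  Cu : ℝ
  cu : ℝ
  cu_pos : 0 < cu
  heat_upper : ∀ t : ℝ, 0 < t → t ≤ 1 → ∀ x y : X,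
    |∑' k, Real.exp (-(lam k) ^ 2 * t) * phi k x * phi k y| ≤
      Cu * t ^ (-(alp / 2)) * Real.exp (-(cu * (rho x y) ^ 2) / t)
  /-- heat kernel lower bound constant -/
  Cl : ℝ
  heat_lower : ∀ t : ℝ, 0 < t → t < 1 → ∀ x : X,
    t ^ (-(alp / 2)) ≤ Cl * ∑' k, Real.exp (-(lam k) ^ 2 * t) * phi k x * phi k x

variable {X : Type*} [TopologicalSpace X] [MeasurableSpace X] [BorelSpace X]

namespace DiffusionSetting

/-- closed ball of the quasi-metric -/
def cball (D : DiffusionSetting X) (x : X) (t : ℝ) : Set X := {y | D.rho x y ≤ t}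

/-- open ball of the quasi-metric -/
def oball (D : DiffusionSetting X) (x : X) (t : ℝ) : Set X := {y | D.rho x y < t}

/-- the space `Π_N` of diffusion polynomials of degree at most `N` -/
def Poly (D : DiffusionSetting X) (N : ℝ) : Submodule ℝ (X → ℝ) :=
  Submodule.span ℝ (D.phi '' {k | D.lam k ≤ N})

/-- best approximation error `E(f, Π_N, L_p(B))` -/
def E (D : DiffusionSetting X) (p : ℝ≥0∞) (B : Set X) (N : ℝ) (f : X → ℝ) : ℝ≥0∞ :=
  ⨅ P : D.Poly N, eLpNorm (f - (P : X → ℝ)) p (D.μ.restrict B)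

/-- the Sobolev norm `‖f‖_{W^s(L_p(B))}` (with values in `ℝ≥0∞`); the supremum over
integers `N ≥ 1` is realized as a supremum over all of `ℕ` since the term at `N = 0`
vanishes for `s > 0`. -/
def sobNorm (D : DiffusionSetting X) (s : ℝ) (p : ℝ≥0∞) (B : Set X) (f : X → ℝ) : ℝ≥0∞ :=
  eLpNorm f p (D.μ.restrict B) + ⨆ N : ℕ, ENNReal.ofReal ((N : ℝ) ^ s) * D.E p B (N : ℝ) f

/-- membership in the Sobolev space `W^s(L_p(B))` -/
def MemSob (D : DiffusionSetting X) (s : ℝ) (p : ℝ≥0∞) (B : Set X) (f : X → ℝ) : Prop :=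
  MemLp f p (D.μ.restrict B) ∧ D.sobNorm s p B f ≠ ⊤

/-- the Sobolev ball `W̄^s_r(L_p(B))` -/
def sobBall (D : DiffusionSetting X) (s : ℝ) (p : ℝ≥0∞) (B : Set X) (r : ℝ) : Set (X → ℝ) :=
  {f | MemLp f p (D.μ.restrict B) ∧ D.sobNorm s p B f ≤ ENNReal.ofReal r}

/-- membership in `X_p(X)`, the `L_p`-closure of the diffusion polynomials -/
def MemXp (D : DiffusionSetting X) (p : ℝ≥0∞) (f : X → ℝ) : Prop :=
  MemLp f p D.μ ∧
    ∀ ε : ℝ, 0 < ε → ∃ N : ℝ, ∃ P ∈ D.Poly N, eLpNorm (f - P) p D.μ ≤ ENNReal.ofReal ε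

/-- membership in `C^∞(X) = ∩_{s>0} W^s(L_∞(X))` -/
def MemCinf (D : DiffusionSetting X) (g : X → ℝ) : Prop :=
  ∀ s : ℝ, 0 < s → D.MemSob s ⊤ Set.univ g

/-- `μ` as a signed measure -/
def muSigned (D : DiffusionSetting X) : SignedMeasure X :=
  haveI := D.μ_prob
  D.μ.toSignedMeasure

end DiffusionSetting

/-- the strong product assumption with constant `a` -/
def StrongProduct (D : DiffusionSetting X) (a : ℝ) : Prop :=
  0 < a ∧ ∀ (N : ℝ) (f g : X → ℝ), f ∈ D.Poly N → g ∈ D.Poly N → f * g ∈ D.Poly (a * N)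

/-- integral of `f` with respect to a signed measure (via the Jordan decomposition) -/
def sInt {Y : Type*} [MeasurableSpace Y] (ν : SignedMeasure Y) (f : Y → ℝ) : ℝ :=
  ∫ x, f x ∂ν.toJordanDecomposition.posPart - ∫ x, f x ∂ν.toJordanDecomposition.negPart

/-- integral of `f` over a set `A` with respect to a signed measure -/
def sIntOn {Y : Type*} [MeasurableSpace Y] (ν : SignedMeasure Y) (A : Set Y) (f : Y → ℝ) : ℝ :=
  ∫ x in A, f x ∂ν.toJordanDecomposition.posPart -
    ∫ x in A, f x ∂ν.toJordanDecomposition.negPart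

/-- the total variation measure `|ν|` of a signed measure -/
def absMeas {Y : Type*} [MeasurableSpace Y] (ν : SignedMeasure Y) : Measure Y :=
  ν.totalVariation

/-- a low-pass filter: infinitely differentiable, nonincreasing on `[0,∞)`,
equal to `1` on `[0,1/2]` and to `0` on `[1,∞)` -/
structure IsLowPass (H : ℝ → ℝ) : Prop where
  smooth : ∀ n : ℕ, ContDiff ℝ n H
  antitoneOn : AntitoneOn H (Set.Ici 0)
  eq_one : ∀ t : ℝ, 0 ≤ t → t ≤ 1 / 2 → H t = 1
  eq_zero : ∀ t : ℝ, 1 ≤ t → H t = 0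

namespace DiffusionSetting

/-- the localized kernel `K_N(x,y) = Σ_k H(λ_k/(2N)) φ_k(x) φ_k(y)` -/
def kernK (D : DiffusionSetting X) (H : ℝ → ℝ) (N : ℝ) (x y : X) : ℝ :=
  ∑' k, H (D.lam k / (2 * N)) * D.phi k x * D.phi k y

/-- the approximation operator `σ_N(f,ν) = ∫ f(y) K_N(·,y) dν(y)` -/
def sigmaOp (D : DiffusionSetting X) (H : ℝ → ℝ) (N : ℝ) (ν : SignedMeasure X)
    (f : X → ℝ) : X → ℝ :=
  fun x => sInt ν fun y => f y * D.kernK H N x y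

/-- `τ_N(f,ν) = σ_N(f,ν) − σ_{N/2}(f,ν)` -/
def tauOp (D : DiffusionSetting X) (H : ℝ → ℝ) (N : ℝ) (ν : SignedMeasure X)
    (f : X → ℝ) : X → ℝ :=
  fun x => D.sigmaOp H N ν f x - D.sigmaOp H (N / 2) ν f x

/-- the quantization `I_N(f,ν,y) = ⌊N^S σ_N(f,ν)(y)⌋` -/
def quantI (D : DiffusionSetting X) (H : ℝ → ℝ) (S N : ℝ) (ν : SignedMeasure X)
    (f : X → ℝ) (y : X) : ℤ :=
  ⌊N ^ S * D.sigmaOp H N ν f y⌋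

/-- the quantized approximation operator
`σ°_N(f,νm,νq,A) = N^{-S} ∫_A I_N(f,νm,y) K_N(·,y) dνq(y)` -/
def sigmaCirc (D : DiffusionSetting X) (H : ℝ → ℝ) (S N : ℝ) (νm νq : SignedMeasure X)
    (A : Set X) (f : X → ℝ) : X → ℝ :=
  fun x => N ^ (-S) * sIntOn νq A fun y => (D.quantI H S N νm f y : ℝ) * D.kernK H N x y

/-- `ν` is a quadrature (exactness) rule on `Π_M` -/
def IsExactOn (D : DiffusionSetting X) (ν : SignedMeasure X) (M : ℝ) : Prop :=
  ∀ f ∈ D.Poly M, sInt ν f = ∫ x, f x ∂D.μ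

/-- uniform family of Marcinkiewicz–Zygmund measures of order `2^n` for exponent `p` -/
def UniformMZFamily (D : DiffusionSetting X) (a : ℝ) (p : ℝ≥0∞)
    (ν : ℕ → SignedMeasure X) : Prop :=
  ∃ c₁ c₂ : ℝ, 0 < c₁ ∧ 0 < c₂ ∧ ∀ n : ℕ, ∀ f ∈ D.Poly (a * 2 ^ n),
    ENNReal.ofReal c₁ * eLpNorm f p D.μ ≤ eLpNorm f p (absMeas (ν n)) ∧
    eLpNorm f p (absMeas (ν n)) ≤ ENNReal.ofReal c₂ * eLpNorm f p D.μ

/-- family of quadrature measures, exact on `Π_{b·2^n}` respectively -/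
def QuadFamily (D : DiffusionSetting X) (b : ℝ) (ν : ℕ → SignedMeasure X) : Prop :=
  ∀ n : ℕ, D.IsExactOn (ν n) (b * 2 ^ n)

/-- the standing convention: for `p = ∞`, `(μ_N)` is a uniform family of MZ quadrature
measures of order `N = 2^n`; for `p < ∞`, `μ_N = μ`. -/
def StandingConvention (D : DiffusionSetting X) (a : ℝ) (p : ℝ≥0∞)
    (m : ℕ → SignedMeasure X) : Prop :=
  (p = ⊤ → D.UniformMZFamily a p m ∧ D.QuadFamily a m) ∧
  (p ≠ ⊤ → ∀ n : ℕ, m n = D.muSigned)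

/-- the local Sobolev norm `‖f‖_{W^s(L_p(X),B)}`, with the supremum over dyadic `N ≥ 2` -/
def sobNormLoc (D : DiffusionSetting X) (H : ℝ → ℝ) (m : ℕ → SignedMeasure X) (s : ℝ)
    (p : ℝ≥0∞) (B : Set X) (f : X → ℝ) : ℝ≥0∞ :=
  eLpNorm f p D.μ + ⨆ n : ℕ, ENNReal.ofReal (((2 : ℝ) ^ (n + 1)) ^ s) *
    eLpNorm (D.tauOp H (2 ^ (n + 1)) (m (n + 1)) f) p (D.μ.restrict B)

/-- the cut-off Sobolev norm `‖f‖_{W^s(L_p(X),φ)}` -/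
def sobNormPhi (D : DiffusionSetting X) (s : ℝ) (p : ℝ≥0∞) (g f : X → ℝ) : ℝ≥0∞ :=
  eLpNorm f p D.μ + ⨆ N : ℕ, ENNReal.ofReal ((N : ℝ) ^ s) * D.E p Set.univ (N : ℝ) (f * g)

/-- membership in the local Sobolev space `W^s(L_p(X),x)` at a point `x` -/
def MemLocalSob (D : DiffusionSetting X) (s : ℝ) (p : ℝ≥0∞) (x : X) (f : X → ℝ) : Prop :=
  D.MemXp p f ∧ ∃ t : ℝ, 0 < t ∧ ∀ g : X → ℝ, D.MemCinf g →
    Function.support g ⊆ D.oball x t → D.MemSob s p Set.univ (f * g)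

end DiffusionSetting

/-- the smooth cut-off property -/
def SmoothCutoff (D : DiffusionSetting X) : Prop :=
  ∀ (x : X) (t' t : ℝ), 0 < t' → t' < t →
    ∃ g : X → ℝ, D.MemCinf g ∧ (∀ y, D.rho x y ≤ t' → g y = 1) ∧
      ∀ y, t < D.rho x y → g y = 0

/-- `(ν_n)` is finitely supported, with `#supp(ν_n) ≤ C (2^n)^a` -/
def FiniteSupportBound {Y : Type*} [MeasurableSpace Y] (ν : ℕ → SignedMeasure Y)
    (C a : ℝ) : Prop :=
  ∀ n : ℕ, ∃ T : Finset Y, absMeas (ν n) (↑T)ᶜ = 0 ∧ (T.card : ℝ) ≤ C * ((2 : ℝ) ^ n) ^ a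

/-- the Kolmogorov `n`-width of `Y` in `Z` -/
def kolmogorovWidth (Z : Type*) [NormedAddCommGroup Z] [NormedSpace ℝ Z] (n : ℕ)
    (Y : Set Z) : ℝ≥0∞ :=
  ⨅ L : {L : Submodule ℝ Z // FiniteDimensional ℝ L ∧ Module.finrank ℝ L = n},
    ⨆ y ∈ Y, ⨅ x : L.1, edist y x

/-- the linear `n`-width of `Y` in `Z` -/
def linearWidth (Z : Type*) [NormedAddCommGroup Z] [NormedSpace ℝ Z] (n : ℕ)
    (Y : Set Z) : ℝ≥0∞ :=
  ⨅ F : {F : Z →L[ℝ] Z // FiniteDimensional ℝ (LinearMap.range (F : Z →ₗ[ℝ] Z)) ∧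
      Module.finrank ℝ (LinearMap.range (F : Z →ₗ[ℝ] Z)) ≤ n},
    ⨆ y ∈ Y, edist y (F.1 y)

/-- the Gelfand `n`-width of `Y` in `Z` -/
def gelfandWidth (Z : Type*) [NormedAddCommGroup Z] [NormedSpace ℝ Z] (n : ℕ)
    (Y : Set Z) : ℝ≥0∞ :=
  ⨅ V : {V : Submodule ℝ Z // IsClosed (V : Set Z) ∧ ∃ W : Submodule ℝ Z,
      FiniteDimensional ℝ W ∧ Module.finrank ℝ W ≤ n ∧ V ⊔ W = ⊤},
    ⨆ y ∈ Y ∩ (V.1 : Set Z), edist y 0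

/-- the Bernstein `n`-width of `Y` in `Z` -/
def bernsteinWidth (Z : Type*) [NormedAddCommGroup Z] [NormedSpace ℝ Z] (n : ℕ)
    (Y : Set Z) : ℝ≥0∞ :=
  ⨆ W : {W : Submodule ℝ Z // ∃ V : Submodule ℝ Z, V ≤ W ∧ FiniteDimensional ℝ V ∧
      Module.finrank ℝ V = n + 1},
    sSup (ENNReal.ofReal '' {t : ℝ | 0 ≤ t ∧ ∀ w : Z, w ∈ W.1 → ‖w‖ ≤ 1 → t • w ∈ Y})


section AuxCompact

variable {X : Type*} [TopologicalSpace X] [MeasurableSpace X] [BorelSpace X]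

/-- A continuous function is in `L_p` of a finite measure restricted to a compact set. -/
lemma memLp_restrict_of_continuous_aux (μ : Measure X) [IsFiniteMeasure μ] {B : Set X}
    (hB : IsCompact B) {f : X → ℝ} (hf : Continuous f) (p : ℝ≥0∞) :
    MemLp f p (μ.restrict B) := by
  obtain ⟨C, hC⟩ := hB.exists_bound_of_continuousOn hf.continuousOn
  set U : Set X := {x | ‖f x‖ < C + 1} with hU
  have hUopen : IsOpen U := isOpen_lt hf.norm continuous_const
  have hBU : B ⊆ U := fun x hx => lt_of_le_of_lt (hC x hx) (by linarith)
  have hbd : ∀ᵐ x ∂μ.restrict U, ‖f x‖ ≤ C + 1 :=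
    ae_restrict_of_forall_mem hUopen.measurableSet (fun x hx => le_of_lt hx)
  have h1 : MemLp f p (μ.restrict U) :=
    MemLp.of_bound hf.stronglyMeasurable.aestronglyMeasurable _ hbd
  exact h1.mono_measure (Measure.restrict_mono hBU le_rfl)

end AuxCompact

/-- the Sobolev ball `W̄^s_r(L_p(B))` is a compact subset of `L_p(B)`. -/
theorem sobolev_ball_isCompact
    (D : DiffusionSetting X) (s : ℝ) (hs : 0 < s) (r : ℝ) (hr : 0 < r)
    (p : ℝ≥0∞) [Fact (1 ≤ p)] (x₀ : X) (t₀ : ℝ) (ht₀ : 0 < t₀) :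
    IsCompact {F : Lp ℝ p (D.μ.restrict (D.cball x₀ t₀)) |
      D.sobNorm s p (D.cball x₀ t₀) ⇑F ≤ ENNReal.ofReal r} := by
  haveI := D.μ_prob
  have hBc : IsCompact (D.cball x₀ t₀) := D.cball_compact x₀ t₀ ht₀
  set B : Set X := D.cball x₀ t₀ with hB
  set ν : Measure X := D.μ.restrict B with hν
  have hmem : ∀ k, MemLp (D.phi k) p ν :=
    fun k => memLp_restrict_of_continuous_aux D.μ hBc (D.phi_cont k) p
  set mphi : ℕ → Lp ℝ p ν := fun k => (hmem k).toLp (D.phi k) with hmphi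
  set V : ℕ → Submodule ℝ (Lp ℝ p ν) :=
    fun n => Submodule.span ℝ (mphi '' {k | D.lam k ≤ (n : ℝ)}) with hVdef
  -- correspondence between `Poly` and `V`
  have corr1 : ∀ (n : ℕ) (P : X → ℝ), P ∈ D.Poly (n : ℝ) →
      ∃ Q ∈ V n, ⇑Q =ᵐ[ν] P := by
    intro n P hP
    have hP' : P ∈ Submodule.span ℝ (D.phi '' {k | D.lam k ≤ ((n : ℕ) : ℝ)}) := hP
    clear hP
    induction hP' using Submodule.span_induction with
    | mem x hx =>
        obtain ⟨k, hk, rfl⟩ := hx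
        exact ⟨mphi k, Submodule.subset_span ⟨k, hk, rfl⟩, (hmem k).coeFn_toLp⟩
    | zero => exact ⟨0, (V n).zero_mem, Lp.coeFn_zero ℝ p ν⟩
    | add x y _ _ hx hy =>
        obtain ⟨Q1, hQ1, hq1⟩ := hx
        obtain ⟨Q2, hQ2, hq2⟩ := hy
        exact ⟨Q1 + Q2, (V n).add_mem hQ1 hQ2, (Lp.coeFn_add Q1 Q2).trans (hq1.add hq2)⟩
    | smul a x _ hx =>
        obtain ⟨Q, hQ, hq⟩ := hx
        exact ⟨a • Q, (V n).smul_mem a hQ, (Lp.coeFn_smul a Q).trans (hq.const_smul a)⟩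
  have corr2 : ∀ (n : ℕ) (Q : Lp ℝ p ν), Q ∈ V n →
      ∃ P ∈ D.Poly (n : ℝ), ⇑Q =ᵐ[ν] P := by
    intro n Q hQ
    induction hQ using Submodule.span_induction with
    | mem x hx =>
        obtain ⟨k, hk, rfl⟩ := hx
        exact ⟨D.phi k, Submodule.subset_span ⟨k, hk, rfl⟩, (hmem k).coeFn_toLp⟩
    | zero => exact ⟨0, (D.Poly ((n : ℕ) : ℝ)).zero_mem, Lp.coeFn_zero ℝ p ν⟩
    | add x y _ _ hx hy =>
        obtain ⟨P1, hP1, hq1⟩ := hx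
        obtain ⟨P2, hP2, hq2⟩ := hy
        exact ⟨P1 + P2, (D.Poly ((n : ℕ) : ℝ)).add_mem hP1 hP2,
          (Lp.coeFn_add x y).trans (hq1.add hq2)⟩
    | smul a x _ hx =>
        obtain ⟨P, hP, hq⟩ := hx
        exact ⟨a • P, (D.Poly ((n : ℕ) : ℝ)).smul_mem a hP,
          (Lp.coeFn_smul a x).trans (hq.const_smul a)⟩
  -- the best approximation error is the `infEdist` to `V n`
  have hE : ∀ (n : ℕ) (F : Lp ℝ p ν),
      D.E p B (n : ℝ) ⇑F = EMetric.infEdist F ((V n : Set (Lp ℝ p ν))) := by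
    intro n F
    apply le_antisymm
    · refine EMetric.le_infEdist.mpr ?_
      intro Q hQ
      obtain ⟨P, hP, hq⟩ := corr2 n Q hQ
      have h1 : D.E p B (n : ℝ) ⇑F ≤ eLpNorm (⇑F - P) p ν :=
        iInf_le (fun P : D.Poly ((n : ℕ) : ℝ) => eLpNorm (⇑F - (P : X → ℝ)) p ν)
          (⟨P, hP⟩ : D.Poly ((n : ℕ) : ℝ))
      refine h1.trans (le_of_eq ?_)
      rw [Lp.edist_def]
      exact eLpNorm_congr_ae (by filter_upwards [hq] with a ha; simp [ha])
    · refine le_iInf fun P => ?_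
      obtain ⟨Q, hQ, hq⟩ := corr1 n P P.2
      calc EMetric.infEdist F ((V n : Set (Lp ℝ p ν))) ≤ edist F Q :=
            EMetric.infEdist_le_edist_of_mem hQ
        _ = eLpNorm (⇑F - ⇑Q) p ν := Lp.edist_def F Q
        _ = eLpNorm (⇑F - (P : X → ℝ)) p ν :=
            eLpNorm_congr_ae (by filter_upwards [hq] with a ha; simp [ha])
  -- rewrite the Sobolev norm
  have hg : ∀ F : Lp ℝ p ν, D.sobNorm s p B ⇑F =
      (‖F‖₊ : ℝ≥0∞) + ⨆ n : ℕ, ENNReal.ofReal ((n : ℝ) ^ s) *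
        EMetric.infEdist F ((V n : Set (Lp ℝ p ν))) := by
    intro F
    unfold DiffusionSetting.sobNorm
    rw [show eLpNorm (⇑F) p (D.μ.restrict B) = (‖F‖₊ : ℝ≥0∞) from
      (Lp.enorm_def F).symm]
    exact congrArg _ (iSup_congr fun n => by rw [hE n F])
  -- closedness
  have hclosed : IsClosed {F : Lp ℝ p ν | D.sobNorm s p B ⇑F ≤ ENNReal.ofReal r} := by
    have hset : {F : Lp ℝ p ν | D.sobNorm s p B ⇑F ≤ ENNReal.ofReal r} =
        ⋂ n : ℕ, {F : Lp ℝ p ν | (‖F‖₊ : ℝ≥0∞) + ENNReal.ofReal ((n : ℝ) ^ s) *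
          EMetric.infEdist F ((V n : Set (Lp ℝ p ν))) ≤ ENNReal.ofReal r} := by
      ext F
      simp only [Set.mem_setOf_eq, Set.mem_iInter, hg F, ENNReal.add_iSup, iSup_le_iff]
    rw [hset]
    refine isClosed_iInter fun n => ?_
    have hcont : Continuous fun F : Lp ℝ p ν =>
        (‖F‖₊ : ℝ≥0∞) + ENNReal.ofReal ((n : ℝ) ^ s) *
          EMetric.infEdist F ((V n : Set (Lp ℝ p ν))) :=
      (ENNReal.continuous_coe.comp continuous_nnnorm).add
        ((ENNReal.continuous_const_mul ENNReal.ofReal_ne_top).comp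
          EMetric.continuous_infEdist)
    exact IsClosed.preimage hcont isClosed_Iic
  -- total boundedness
  have htb : TotallyBounded {F : Lp ℝ p ν | D.sobNorm s p B ⇑F ≤ ENNReal.ofReal r} := by
    rw [Metric.totallyBounded_iff]
    intro ε hε
    obtain ⟨n, hn⟩ : ∃ n : ℕ, 4 * r / ε + 1 ≤ (n : ℝ) ^ s :=
      (((tendsto_rpow_atTop hs).comp
        tendsto_natCast_atTop_atTop).eventually_ge_atTop _).exists
    have hns : 0 < (n : ℝ) ^ s := lt_of_lt_of_le (by positivity) hn
    have hfin : {k | D.lam k ≤ (n : ℝ)}.Finite := by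
      obtain ⟨K, hK⟩ := Filter.eventually_atTop.mp
        (D.lam_tendsto.eventually_ge_atTop ((n : ℝ) + 1))
      refine Set.Finite.subset (Set.finite_Iio K) fun k hk => ?_
      by_contra hkK
      simp only [Set.mem_Iio, not_lt] at hkK
      have h1 := hK k hkK
      have h2 : D.lam k ≤ (n : ℝ) := hk
      linarith
    haveI : FiniteDimensional ℝ (V n) := FiniteDimensional.span_of_finite ℝ (hfin.image mphi)
    set C : Set (Lp ℝ p ν) := Subtype.val '' (Metric.closedBall (0 : V n) (r + ε)) with hC
    have hCcomp : IsCompact C :=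
      (isCompact_closedBall (0 : V n) (r + ε)).image continuous_subtype_val
    obtain ⟨t, htfin, htcov⟩ :=
      Metric.totallyBounded_iff.mp hCcomp.totallyBounded (ε / 3) (by linarith)
    refine ⟨t, htfin, fun F hF => ?_⟩
    have hgF : (‖F‖₊ : ℝ≥0∞) + ⨆ m : ℕ, ENNReal.ofReal ((m : ℝ) ^ s) *
        EMetric.infEdist F ((V m : Set (Lp ℝ p ν))) ≤ ENNReal.ofReal r := by
      rw [← hg F]; exact hF
    have h1 : (‖F‖₊ : ℝ≥0∞) ≤ ENNReal.ofReal r := le_trans (self_le_add_right _ _) hgF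
    have hnorm : ‖F‖ ≤ r := by
      have h2 := ENNReal.toReal_mono ENNReal.ofReal_ne_top h1
      rwa [ENNReal.coe_toReal, coe_nnnorm, ENNReal.toReal_ofReal hr.le] at h2
    have h3 : ENNReal.ofReal ((n : ℝ) ^ s) *
        EMetric.infEdist F ((V n : Set (Lp ℝ p ν))) ≤ ENNReal.ofReal r :=
      le_trans (le_trans (le_iSup (fun m : ℕ => ENNReal.ofReal ((m : ℝ) ^ s) *
        EMetric.infEdist F ((V m : Set (Lp ℝ p ν)))) n) (le_add_self)) hgF
    have hinf : EMetric.infEdist F ((V n : Set (Lp ℝ p ν))) ≤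
        ENNReal.ofReal (r / (n : ℝ) ^ s) := by
      rw [ENNReal.ofReal_div_of_pos hns, ENNReal.le_div_iff_mul_le
        (Or.inl ((ENNReal.ofReal_pos.mpr hns).ne')) (Or.inl ENNReal.ofReal_ne_top)]
      rwa [mul_comm]
    have hlt : r / (n : ℝ) ^ s < ε / 3 := by
      rw [div_lt_iff₀ hns]
      have h4 : 3 * r / ε < (n : ℝ) ^ s := by
        have h5 : 0 < r / ε := div_pos hr hε
        have h6 : 3 * r / ε < 4 * r / ε + 1 := by
          rw [mul_div_assoc, mul_div_assoc]; linarith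
        linarith
      calc r = ε / 3 * (3 * r / ε) := by field_simp
        _ < ε / 3 * ((n : ℝ) ^ s) := by
            exact mul_lt_mul_of_pos_left h4 (by linarith)
    have hinf2 : EMetric.infEdist F ((V n : Set (Lp ℝ p ν))) < ENNReal.ofReal (ε / 3) :=
      lt_of_le_of_lt hinf ((ENNReal.ofReal_lt_ofReal_iff (by linarith)).mpr hlt)
    obtain ⟨Q, hQV, hQd⟩ := EMetric.infEdist_lt_iff.mp hinf2
    have hdist : dist F Q < ε / 3 := edist_lt_ofReal.mp hQd
    have hQnorm : ‖Q‖ ≤ r + ε := by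
      have : ‖Q‖ ≤ dist Q F + ‖F‖ := by
        calc ‖Q‖ = dist Q 0 := (dist_zero_right Q).symm
          _ ≤ dist Q F + dist F 0 := dist_triangle Q F 0
          _ = dist Q F + ‖F‖ := by rw [dist_zero_right]
      rw [dist_comm] at this
      linarith
    have hQC : Q ∈ C := by
      refine ⟨⟨Q, hQV⟩, ?_, rfl⟩
      rw [Metric.mem_closedBall, dist_zero_right]
      exact hQnorm
    obtain ⟨y, hyt, hyd⟩ := Set.mem_iUnion₂.mp (htcov hQC)
    refine Set.mem_iUnion₂.mpr ⟨y, hyt, ?_⟩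
    rw [Metric.mem_ball] at hyd ⊢
    calc dist F y ≤ dist F Q + dist Q y := dist_triangle F Q y
      _ < ε / 3 + ε / 3 := by exact add_lt_add hdist hyd
      _ < ε := by linarith
  exact TotallyBounded.isCompact_of_isClosed htb hclosed
end
end

section
/- Let H be a low-pass filter, h := √H, g(t) := √(h(t/2)² − h(t)²), and let n ≥ 0 with N = 2^{n+1}. Define Φ_y := Σ_k h(λ_k) φ_k(y) φ_k and, for 0 ≤ j ≤ n, Ψ_{j,y} := Σ_k g(2^{−j}λ_k) φ_k(y) φ_k (finite sums, since h is supported in [0,1] and g(2^{−j}·) is supported in [0,2^{j+1}]). Let ν_{−1}, ν_0, …, ν_n be signed Borel measures on X with ∫ P dν_{−1} = ∫ P dμ for all P ∈ Π_{2a}, and ∫ P dν_j = ∫ P dμ for all P ∈ Π_{a·2^{j+1}} (0 ≤ j ≤ n), where a is the constant of the strong product assumption. Then for every f ∈ L²(X,μ), as elements of L²(X,μ): Σ_k H(λ_k/N) ⟨f,φ_k⟩ φ_k = ∫_X ⟨f,Φ_y⟩ Φ_y dν_{−1}(y) + Σ_{j=0}^{n} ∫_X ⟨f,Ψ_{j,y}⟩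 Ψ_{j,y} dν_j(y). -/
open MeasureTheory ENNReal

noncomputable section

variable {X : Type*} [TopologicalSpace X] [MeasurableSpace X] [BorelSpace X]

lemma integrable_mul_L2 {α : Type*} [MeasurableSpace α] {μ : Measure α} {f g : α → ℝ}
    (hf : MemLp f 2 μ) (hg : MemLp g 2 μ) : Integrable (fun x => f x * g x) μ := by
  have h1 : Integrable (fun x => (f x ^ 2 + g x ^ 2) / 2) μ :=
    (hf.integrable_sq.add hg.integrable_sq).div_const 2
  refine h1.mono' (hf.1.mul hg.1) (Filter.Eventually.of_forall fun x => ?_)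
  rw [Real.norm_eq_abs, abs_mul]
  nlinarith [sq_nonneg (|f x| - |g x|), sq_abs (f x), sq_abs (g x),
    abs_nonneg (f x), abs_nonneg (g x)]

namespace DiffusionSetting

lemma lam_nonneg (D : DiffusionSetting X) (k : ℕ) : 0 ≤ D.lam k :=
  D.lam_zero ▸ D.lam_mono (Nat.zero_le k)

lemma phi_memL2 (D : DiffusionSetting X) (k : ℕ) : MemLp (D.phi k) 2 D.μ := by
  have hm : AEStronglyMeasurable (D.phi k) D.μ := (D.phi_cont k).aestronglyMeasurable
  rw [memLp_two_iff_integrable_sq hm]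
  by_contra hni
  have h0 : ∫ x, D.phi k x * D.phi k x ∂D.μ = 0 := by
    apply integral_undef
    simpa [pow_two] using hni
  have h1 := D.phi_orthonormal k k
  rw [h0] at h1
  simp at h1

lemma poly_mono (D : DiffusionSetting X) {M N : ℝ} (h : M ≤ N) : D.Poly M ≤ D.Poly N :=
  Submodule.span_mono (Set.image_mono fun _ hk => le_trans hk h)

lemma integral_sum_mul_sum (D : DiffusionSetting X) (K : ℕ) (A B : ℕ → ℝ) :
    ∫ y, (∑ k ∈ Finset.range K, A k * D.phi k y) *
        (∑ l ∈ Finset.range K, B l * D.phi l y) ∂D.μ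
      = ∑ k ∈ Finset.range K, A k * B k := by
  have hker : ∀ k l : ℕ, Integrable (fun y => (A k * D.phi k y) * (B l * D.phi l y)) D.μ := by
    intro k l
    exact ((integrable_mul_L2 (D.phi_memL2 k) (D.phi_memL2 l)).const_mul (A k * B l)).congr
      (Filter.Eventually.of_forall fun y => by ring)
  simp_rw [Finset.sum_mul_sum]
  rw [integral_finset_sum _ fun k _ => integrable_finset_sum _ fun l _ => hker k l]
  refine Finset.sum_congr rfl fun k hk => ?_
  rw [integral_finset_sum _ fun l _ => hker k l]
  have hterm : ∀ l : ℕ, ∫ y, (A k * D.phi k y) * (B l * D.phi l y) ∂D.μ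
      = if k = l then A k * B l else 0 := by
    intro l
    rw [show (fun y => (A k * D.phi k y) * (B l * D.phi l y))
        = fun y => (A k * B l) * (D.phi k y * D.phi l y) from funext fun y => by ring,
      integral_const_mul, D.phi_orthonormal k l]
    simp
  simp_rw [hterm]
  rw [Finset.sum_ite_eq (Finset.range K) k (fun l => A k * B l)]
  simp [Finset.mem_range.mp hk]

end DiffusionSetting

namespace DiffusionSetting

lemma key_quadrature (D : DiffusionSetting X) {a : ℝ} (hprod : StrongProduct D a)
    (ν : SignedMeasure X) {M M' : ℝ} (hexact : D.IsExactOn ν M') (hMM' : a * M ≤ M')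
    (c : ℕ → ℝ) (hc : ∀ k, c k ≠ 0 → D.lam k ≤ M)
    (K : ℕ) {f : X → ℝ} (hf : MemLp f 2 D.μ) (x : X) :
    sInt ν (fun y => (∫ z, f z * (∑ k ∈ Finset.range K, c k * D.phi k y * D.phi k z) ∂D.μ) *
        (∑ k ∈ Finset.range K, c k * D.phi k y * D.phi k x)) =
      ∑ k ∈ Finset.range K, c k ^ 2 * (∫ z, f z * D.phi k z ∂D.μ) * D.phi k x := by
  set fh : ℕ → ℝ := fun k => ∫ z, f z * D.phi k z ∂D.μ with hfh
  have hstep1 : ∀ y : X, (∫ z, f z * (∑ k ∈ Finset.range K, c k * D.phi k y * D.phi k z) ∂D.μ)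
      = ∑ k ∈ Finset.range K, (c k * fh k) * D.phi k y := by
    intro y
    have hint : ∀ k ∈ Finset.range K,
        Integrable (fun z => f z * (c k * D.phi k y * D.phi k z)) D.μ := by
      intro k _
      exact ((integrable_mul_L2 hf (D.phi_memL2 k)).const_mul (c k * D.phi k y)).congr
        (Filter.Eventually.of_forall fun z => by ring)
    calc ∫ z, f z * (∑ k ∈ Finset.range K, c k * D.phi k y * D.phi k z) ∂D.μ
        = ∫ z, ∑ k ∈ Finset.range K, f z * (c k * D.phi k y * D.phi k z) ∂D.μ := by
          simp_rw [Finset.mul_sum]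
      _ = ∑ k ∈ Finset.range K, ∫ z, f z * (c k * D.phi k y * D.phi k z) ∂D.μ :=
          integral_finset_sum _ hint
      _ = ∑ k ∈ Finset.range K, (c k * fh k) * D.phi k y := by
          refine Finset.sum_congr rfl fun k _ => ?_
          rw [show (fun z => f z * (c k * D.phi k y * D.phi k z))
              = fun z => (c k * D.phi k y) * (f z * D.phi k z) from funext fun z => by ring,
            integral_const_mul]
          ring
  set P : X → ℝ := ∑ k ∈ Finset.range K, (c k * fh k) • D.phi k with hP
  set Q : X → ℝ := ∑ k ∈ Finset.range K, (c k * D.phi k x) • D.phi k with hQ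
  have hPapp : ∀ y, P y = ∑ k ∈ Finset.range K, (c k * fh k) * D.phi k y := by
    intro y; rw [hP]; simp [Finset.sum_apply]
  have hQapp : ∀ y, Q y = ∑ k ∈ Finset.range K, (c k * D.phi k x) * D.phi k y := by
    intro y; rw [hQ]; simp [Finset.sum_apply]
  have hmem : ∀ b : ℕ → ℝ, (∑ k ∈ Finset.range K, (c k * b k) • D.phi k) ∈ D.Poly M := by
    intro b
    refine Submodule.sum_mem _ fun k _ => ?_
    by_cases hck : c k = 0
    · simp [hck]
    · exact Submodule.smul_mem _ _ (Submodule.subset_span ⟨k, hc k hck, rfl⟩)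
  have hPQ : P * Q ∈ D.Poly M' :=
    D.poly_mono hMM' (hprod.2 M P Q (hmem _) (hmem _))
  have hFeq : (fun y => (∫ z, f z * (∑ k ∈ Finset.range K, c k * D.phi k y * D.phi k z) ∂D.μ) *
      (∑ k ∈ Finset.range K, c k * D.phi k y * D.phi k x)) = P * Q := by
    funext y
    rw [Pi.mul_apply, hstep1 y, hPapp, hQapp]
    congr 1
    exact Finset.sum_congr rfl fun k _ => by ring
  rw [hFeq, hexact _ hPQ]
  calc ∫ y, (P * Q) y ∂D.μ
      = ∫ y, (∑ k ∈ Finset.range K, (c k * fh k) * D.phi k y) *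
          (∑ l ∈ Finset.range K, (c l * D.phi l x) * D.phi l y) ∂D.μ :=
        integral_congr_ae (Filter.Eventually.of_forall fun y => by
          rw [Pi.mul_apply, hPapp, hQapp])
    _ = ∑ k ∈ Finset.range K, (c k * fh k) * (c k * D.phi k x) :=
        D.integral_sum_mul_sum K _ _
    _ = ∑ k ∈ Finset.range K, c k ^ 2 * fh k * D.phi k x :=
        Finset.sum_congr rfl fun k _ => by ring

end DiffusionSetting
/-- finite-scale wavelet identity: with `h = √H`, `g(t) = √(h(t/2)²−h(t)²)`,
wavelets `Φ_y = Σ_k h(λ_k)φ_k(y)φ_k`, `Ψ_{j,y} = Σ_k g(2^{-j}λ_k)φ_k(y)φ_k` and quadrature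
measures `ν_{-1}, ν_0, …, ν_n` exact on `Π_{2a}` and `Π_{a·2^{j+1}}` respectively, one has,
for `f ∈ L²(X,μ)` and `N = 2^{n+1}`, as elements of `L²(X,μ)`:
`Σ_k H(λ_k/N)⟨f,φ_k⟩φ_k = ∫⟨f,Φ_y⟩Φ_y dν_{-1}(y) + Σ_{j=0}^n ∫⟨f,Ψ_{j,y}⟩Ψ_{j,y} dν_j(y)`. -/
theorem wavelet_identity_finite_scale
    (D : DiffusionSetting X) (a : ℝ) (hprod : StrongProduct D a)
    (H : ℝ → ℝ) (hH : IsLowPass H)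
    (h g : ℝ → ℝ) (hh : ∀ t : ℝ, h t = Real.sqrt (H t))
    (hg : ∀ t : ℝ, g t = Real.sqrt ((h (t / 2)) ^ 2 - (h t) ^ 2))
    (n : ℕ)
    (Φ : X → X → ℝ) (hΦ : ∀ y x, Φ y x = ∑' k, h (D.lam k) * D.phi k y * D.phi k x)
    (Ψ : ℕ → X → X → ℝ)
    (hΨ : ∀ j y x, Ψ j y x = ∑' k, g ((2 : ℝ) ^ (-(j : ℝ)) * D.lam k) * D.phi k y * D.phi k x)
    (νneg : SignedMeasure X) (hνneg : D.IsExactOn νneg (2 * a))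
    (ν : ℕ → SignedMeasure X) (hν : ∀ j : ℕ, D.IsExactOn (ν j) (a * 2 ^ (j + 1)))
    (f : X → ℝ) (hf : MemLp f 2 D.μ) :
    (fun x => ∑' k, H (D.lam k / 2 ^ (n + 1)) * (∫ z, f z * D.phi k z ∂D.μ) * D.phi k x)
      =ᵐ[D.μ]
    (fun x => sInt νneg (fun y => (∫ z, f z * Φ y z ∂D.μ) * Φ y x) +
      ∑ j ∈ Finset.range (n + 1),
        sInt (ν j) (fun y => (∫ z, f z * Ψ j y z ∂D.μ) * Ψ j y x)) := by
  -- basic facts about H, h, g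
  have hH0 : ∀ t : ℝ, 0 ≤ t → 0 ≤ H t := by
    intro t ht
    rcases le_or_gt 1 t with h1 | h1
    · rw [hH.eq_zero t h1]
    · have h2 := hH.antitoneOn (Set.mem_Ici.mpr ht) (Set.mem_Ici.mpr zero_le_one) h1.le
      rwa [hH.eq_zero 1 le_rfl] at h2
  have hhsq : ∀ t : ℝ, 0 ≤ t → h t ^ 2 = H t := fun t ht => by
    rw [hh t]; exact Real.sq_sqrt (hH0 t ht)
  have hgsq : ∀ t : ℝ, 0 ≤ t → g t ^ 2 = H (t / 2) - H t := by
    intro t ht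
    have ht2 : 0 ≤ t / 2 := by linarith
    have hmono : H t ≤ H (t / 2) :=
      hH.antitoneOn (Set.mem_Ici.mpr ht2) (Set.mem_Ici.mpr ht) (by linarith)
    rw [hg t, hhsq _ ht2, hhsq _ ht]
    exact Real.sq_sqrt (by linarith)
  have hhz : ∀ t : ℝ, 1 ≤ t → h t = 0 := fun t ht => by
    rw [hh t, hH.eq_zero t ht, Real.sqrt_zero]
  have hgz : ∀ t : ℝ, 2 ≤ t → g t = 0 := by
    intro t ht
    rw [hg t, hhz t (by linarith), hhz (t / 2) (by linarith)]
    simp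
  -- rpow facts
  have hrpow : ∀ j : ℕ, (2 : ℝ) ^ (-(j : ℝ)) = ((2 : ℝ) ^ j)⁻¹ := by
    intro j
    rw [Real.rpow_neg (by norm_num), Real.rpow_natCast]
  have hrpos : ∀ j : ℕ, (0 : ℝ) < (2 : ℝ) ^ (-(j : ℝ)) := fun j => by
    rw [hrpow]; positivity
  have two_pow_pos : (0 : ℝ) < 2 ^ (n + 1) := by positivity
  have hone : (1 : ℝ) ≤ 2 ^ (n + 1) := one_le_pow₀ one_le_two
  -- choose the finite cutoff K
  obtain ⟨K, hK⟩ := Filter.eventually_atTop.mp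
    (D.lam_tendsto.eventually_ge_atTop ((2 : ℝ) ^ (n + 1)))
  -- finite-sum forms of the kernels
  have hΦ' : ∀ y x', Φ y x' = ∑ k ∈ Finset.range K, h (D.lam k) * D.phi k y * D.phi k x' := by
    intro y x'
    rw [hΦ y x']
    refine tsum_eq_sum fun k hk => ?_
    have hKk : K ≤ k := le_of_not_gt (by simpa [Finset.mem_range] using hk)
    have h1 : (1 : ℝ) ≤ D.lam k := le_trans hone (hK k hKk)
    rw [hhz _ h1]; ring
  have hΨ' : ∀ j : ℕ, j ≤ n → ∀ y x', Ψ j y x' =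
      ∑ k ∈ Finset.range K, g ((2 : ℝ) ^ (-(j : ℝ)) * D.lam k) * D.phi k y * D.phi k x' := by
    intro j hj y x'
    rw [hΨ j y x']
    refine tsum_eq_sum fun k hk => ?_
    have hKk : K ≤ k := le_of_not_gt (by simpa [Finset.mem_range] using hk)
    have h2 : (2 : ℝ) ≤ (2 : ℝ) ^ (-(j : ℝ)) * D.lam k := by
      have hlam := hK k hKk
      have hstep : (2 : ℝ) ^ (-(j : ℝ)) * 2 ^ (n + 1) ≤ (2 : ℝ) ^ (-(j : ℝ)) * D.lam k :=
        mul_le_mul_of_nonneg_left hlam (hrpos j).le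
      have hsplit : (2 : ℝ) ^ (n + 1) = 2 ^ j * 2 ^ (n + 1 - j) := by
        rw [← pow_add]; congr 1; omega
      have h3 : (2 : ℝ) ^ (-(j : ℝ)) * 2 ^ (n + 1) = 2 ^ (n + 1 - j) := by
        rw [hrpow, hsplit, ← mul_assoc, inv_mul_cancel₀ (by positivity), one_mul]
      have h4 : (2 : ℝ) ≤ 2 ^ (n + 1 - j) := by
        calc (2 : ℝ) = 2 ^ 1 := (pow_one 2).symm
          _ ≤ 2 ^ (n + 1 - j) := pow_le_pow_right₀ one_le_two (by omega)
      rw [h3] at hstep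
      linarith
    rw [hgz _ h2]; ring
  -- coefficient support bounds
  have hhc : ∀ k, h (D.lam k) ≠ 0 → D.lam k ≤ 1 := by
    intro k hk
    by_contra hgt
    exact hk (hhz _ (not_le.mp hgt).le)
  have hgc : ∀ j : ℕ, ∀ k, g ((2 : ℝ) ^ (-(j : ℝ)) * D.lam k) ≠ 0 →
      D.lam k ≤ 2 ^ (j + 1) := by
    intro j k hk
    by_contra hgt
    push_neg at hgt
    refine hk (hgz _ ?_)
    have h2 : (2 : ℝ) ^ (-(j : ℝ)) * 2 ^ (j + 1) = 2 := by
      rw [hrpow, pow_succ, ← mul_assoc, inv_mul_cancel₀ (by positivity), one_mul]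
    have hstep := mul_le_mul_of_nonneg_left hgt.le (hrpos j).le
    rwa [h2] at hstep
  -- the telescoping identity
  have htel : ∀ k, H (D.lam k / 2 ^ (n + 1)) =
      h (D.lam k) ^ 2 + ∑ j ∈ Finset.range (n + 1), g ((2 : ℝ) ^ (-(j : ℝ)) * D.lam k) ^ 2 := by
    intro k
    have hl0 : 0 ≤ D.lam k := D.lam_nonneg k
    have key2 : ∑ j ∈ Finset.range (n + 1), g ((2 : ℝ) ^ (-(j : ℝ)) * D.lam k) ^ 2
        = H ((2 : ℝ) ^ (-((n + 1 : ℕ) : ℝ)) * D.lam k)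
          - H ((2 : ℝ) ^ (-((0 : ℕ) : ℝ)) * D.lam k) := by
      rw [← Finset.sum_range_sub (fun j : ℕ => H ((2 : ℝ) ^ (-(j : ℝ)) * D.lam k)) (n + 1)]
      refine Finset.sum_congr rfl fun j _ => ?_
      have harg : 0 ≤ (2 : ℝ) ^ (-(j : ℝ)) * D.lam k := mul_nonneg (hrpos j).le hl0
      rw [hgsq _ harg]
      have hdiv : (2 : ℝ) ^ (-(j : ℝ)) * D.lam k / 2
          = (2 : ℝ) ^ (-((j + 1 : ℕ) : ℝ)) * D.lam k := by
        rw [hrpow, hrpow, pow_succ]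
        field_simp
      rw [hdiv]
    have h0' : (2 : ℝ) ^ (-((0 : ℕ) : ℝ)) * D.lam k = D.lam k := by
      simp [Real.rpow_zero]
    have hN' : (2 : ℝ) ^ (-((n + 1 : ℕ) : ℝ)) * D.lam k = D.lam k / 2 ^ (n + 1) := by
      rw [hrpow, inv_mul_eq_div]
    rw [key2, h0', hN', hhsq _ hl0]
    ring
  -- pointwise identity
  refine Filter.Eventually.of_forall fun x => ?_
  beta_reduce
  have hLHS : (∑' k, H (D.lam k / 2 ^ (n + 1)) * (∫ z, f z * D.phi k z ∂D.μ) * D.phi k x)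
      = ∑ k ∈ Finset.range K,
          H (D.lam k / 2 ^ (n + 1)) * (∫ z, f z * D.phi k z ∂D.μ) * D.phi k x := by
    refine tsum_eq_sum fun k hk => ?_
    have hKk : K ≤ k := le_of_not_gt (by simpa [Finset.mem_range] using hk)
    have h1 : (1 : ℝ) ≤ D.lam k / 2 ^ (n + 1) := (one_le_div two_pow_pos).mpr (hK k hKk)
    rw [hH.eq_zero _ h1]; ring
  have e1 : (fun y => (∫ z, f z * Φ y z ∂D.μ) * Φ y x)
      = fun y => (∫ z, f z *
          (∑ k ∈ Finset.range K, h (D.lam k) * D.phi k y * D.phi k z) ∂D.μ) *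
        (∑ k ∈ Finset.range K, h (D.lam k) * D.phi k y * D.phi k x) := by
    funext y; simp only [hΦ']
  have hRHS1 : sInt νneg (fun y => (∫ z, f z * Φ y z ∂D.μ) * Φ y x)
      = ∑ k ∈ Finset.range K,
          h (D.lam k) ^ 2 * (∫ z, f z * D.phi k z ∂D.μ) * D.phi k x := by
    rw [e1]
    exact D.key_quadrature hprod νneg hνneg (M := 1) (by nlinarith [hprod.1])
      (fun k => h (D.lam k)) hhc K hf x
  have hRHS2 : ∀ j ∈ Finset.range (n + 1),
      sInt (ν j) (fun y => (∫ z, f z * Ψ j y z ∂D.μ) * Ψ j y x)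
      = ∑ k ∈ Finset.range K, g ((2 : ℝ) ^ (-(j : ℝ)) * D.lam k) ^ 2 *
          (∫ z, f z * D.phi k z ∂D.μ) * D.phi k x := by
    intro j hj
    have hj' : j ≤ n := Nat.lt_succ_iff.mp (Finset.mem_range.mp hj)
    have e2 : (fun y => (∫ z, f z * Ψ j y z ∂D.μ) * Ψ j y x)
        = fun y => (∫ z, f z * (∑ k ∈ Finset.range K,
            g ((2 : ℝ) ^ (-(j : ℝ)) * D.lam k) * D.phi k y * D.phi k z) ∂D.μ) *
          (∑ k ∈ Finset.range K,
            g ((2 : ℝ) ^ (-(j : ℝ)) * D.lam k) * D.phi k y * D.phi k x) := by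
      funext y; simp only [hΨ' j hj']
    rw [e2]
    exact D.key_quadrature hprod (ν j) (hν j) (M := (2 : ℝ) ^ (j + 1)) le_rfl
      (fun k => g ((2 : ℝ) ^ (-(j : ℝ)) * D.lam k)) (hgc j) K hf x
  rw [hLHS, hRHS1, Finset.sum_congr rfl hRHS2]
  have hswap : ∑ j ∈ Finset.range (n + 1), ∑ k ∈ Finset.range K,
        g ((2 : ℝ) ^ (-(j : ℝ)) * D.lam k) ^ 2 * (∫ z, f z * D.phi k z ∂D.μ) * D.phi k x
      = ∑ k ∈ Finset.range K,
        (∑ j ∈ Finset.range (n + 1), g ((2 : ℝ) ^ (-(j : ℝ)) * D.lam k) ^ 2) *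
          (∫ z, f z * D.phi k z ∂D.μ) * D.phi k x := by
    rw [Finset.sum_comm]
    exact Finset.sum_congr rfl fun k _ => by rw [Finset.sum_mul, Finset.sum_mul]
  rw [hswap, ← Finset.sum_add_distrib]
  refine Finset.sum_congr rfl fun k _ => ?_
  rw [htel k]
  ring
end
end
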